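/- Let q be a real number with 0 < q < 1 and let p, r, t ∈ ℂ. Then the following are equivalent: (a) p̄ = p, rp = q⁸pr, rt = q⁴tr, pt = q⁻⁴tp, t² = q²pr, r·t̄ = q²t(−q⁴p+1), r̄·t = q⁻²t̄(−p+1), r·r̄ = q¹²p² − q⁴(1+q⁴)p + 1, r̄·r = q⁻⁴p² − (1+q⁻⁴)p + 1, t·t̄ = −q⁴p² + p, and t̄·t = q⁻⁴(p − p²); (b) p = 0, t = 0, and |r| = 1. (Here z̄ denotes complex conjugation.) In other words, the one-dimensional *-representations of the quantum real projective plane algebra are exactly ρ_θ with ρ_θ(P) = ρ_θ(T) = 0 and ρ_θ(R) = e^{iθ}, θ ∈ [0,2π). -/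

import Mathlib

open Complex in
/-- For `0 < q < 1` and complex numbers `p, r, t`, the defining relations of
the quantum real projective plane (with complex conjugation as the `*`-operation) hold if and
only if `p = 0`, `t = 0` and `|r| = 1`; i.e. the one-dimensional `*`-representations of
`O(ℝP²_q)` are exactly the `ρ_θ`. -/
theorem stmt7 (q : ℝ) (hq0 : 0 < q) (hq1 : q < 1) (p r t : ℂ) :
    ((starRingEnd ℂ) p = p ∧
     r * p = (q : ℂ) ^ 8 * (p * r) ∧
     r * t = (q : ℂ) ^ 4 * (t * r) ∧
     p * t = ((q : ℂ) ^ 4)⁻¹ * (t * p) ∧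
     t ^ 2 = (q : ℂ) ^ 2 * (p * r) ∧
     r * (starRingEnd ℂ) t = (q : ℂ) ^ 2 * (t * (-((q : ℂ) ^ 4) * p + 1)) ∧
     (starRingEnd ℂ) r * t = ((q : ℂ) ^ 2)⁻¹ * ((starRingEnd ℂ) t * (-p + 1)) ∧
     r * (starRingEnd ℂ) r = (q : ℂ) ^ 12 * p ^ 2 - (q : ℂ) ^ 4 * (1 + (q : ℂ) ^ 4) * p + 1 ∧
     (starRingEnd ℂ) r * r = ((q : ℂ) ^ 4)⁻¹ * p ^ 2 - (1 + ((q : ℂ) ^ 4)⁻¹) * p + 1 ∧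
     t * (starRingEnd ℂ) t = -((q : ℂ) ^ 4) * p ^ 2 + p ∧
     (starRingEnd ℂ) t * t = ((q : ℂ) ^ 4)⁻¹ * (p - p ^ 2))
    ↔ (p = 0 ∧ t = 0 ∧ ‖r‖ = 1) := by
  have hqne : (q : ℂ) ≠ 0 := by
    exact_mod_cast (ne_of_gt hq0)
  have hq4 : ((q : ℂ) ^ 4) ≠ 0 := pow_ne_zero _ hqne
  have hq41 : ((q : ℂ) ^ 4) ≠ 1 := by
    intro h
    have : (q : ℝ) ^ 4 = 1 := by exact_mod_cast h
    nlinarith [pow_lt_one₀ (le_of_lt hq0) hq1 (by norm_num : (4:ℕ) ≠ 0)]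
  have hq81 : ((q : ℂ) ^ 8) ≠ 1 := by
    intro h
    have : (q : ℝ) ^ 8 = 1 := by exact_mod_cast h
    nlinarith [pow_pos hq0 8, pow_lt_one₀ (le_of_lt hq0) hq1 (by norm_num : (8:ℕ) ≠ 0)]
  constructor
  · rintro ⟨h1, h2, h3, h4, h5, h6, h7, h8, h9, h10, h11⟩
    -- p * r = 0
    have hpr : p * r = 0 := by
      have h2' : p * r * (1 - (q : ℂ) ^ 8) = 0 := by linear_combination h2
      rcases mul_eq_zero.mp h2' with h | h
      · exact h
      · exact absurd (by linear_combination -h) hq81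
    -- p * t = 0
    have h4' : (q : ℂ) ^ 4 * (p * t) = t * p := by
      field_simp at h4
      linear_combination h4
    have hpt : p * t = 0 := by
      have : p * t * ((q : ℂ) ^ 4 - 1) = 0 := by linear_combination h4'
      rcases mul_eq_zero.mp this with h | h
      · exact h
      · exact absurd (by linear_combination h) hq41
    -- key equation from h10 = h11
    have h11' : (q : ℂ) ^ 4 * ((starRingEnd ℂ) t * t) = p - p ^ 2 := by
      field_simp at h11
      linear_combination h11
    have key : p ^ 2 * (1 - (q : ℂ) ^ 8) - p * (1 - (q : ℂ) ^ 4) = 0 := by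
      linear_combination h11' - (q : ℂ) ^ 4 * h10
    by_cases hp : p = 0
    · subst hp
      have ht0 : t * (starRingEnd ℂ) t = 0 := by
        rw [h10]; ring
      have ht : t = 0 := by
        rcases mul_eq_zero.mp ht0 with h | h
        · exact h
        · simpa using congrArg (starRingEnd ℂ) h
      refine ⟨rfl, ht, ?_⟩
      have hr1 : r * (starRingEnd ℂ) r = 1 := by rw [h8]; ring
      have : (Complex.normSq r : ℂ) = 1 := by rw [← Complex.mul_conj]; exact hr1
      have hns : Complex.normSq r = 1 := by exact_mod_cast this
      have habs : ‖r‖ ^ 2 = 1 := by rw [Complex.sq_norm, hns]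
      nlinarith [norm_nonneg r]
    · exfalso
      have hr : r = 0 := by
        rcases mul_eq_zero.mp hpr with h | h
        · exact absurd h hp
        · exact h
      have ht : t = 0 := by
        rcases mul_eq_zero.mp hpt with h | h
        · exact absurd h hp
        · exact h
      subst hr; subst ht
      have e1 : (q : ℂ) ^ 4 * p = 1 := by
        have h10' : p * ((q : ℂ) ^ 4 * p - 1) = 0 := by
          linear_combination h10
        rcases mul_eq_zero.mp h10' with h | h
        · exact absurd h hp
        · linear_combination h
      have key2 : p * (1 - (q : ℂ) ^ 8) = 1 - (q : ℂ) ^ 4 := by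
        have : p * (p * (1 - (q : ℂ) ^ 8) - (1 - (q : ℂ) ^ 4)) = 0 := by
          linear_combination key
        rcases mul_eq_zero.mp this with h | h
        · exact absurd h hp
        · linear_combination h
      have : (q : ℂ) ^ 4 = 1 := by
        linear_combination (1 - (q : ℂ) ^ 8) * e1 - (q : ℂ) ^ 4 * key2
      exact hq41 this
  · rintro ⟨hp, ht, hr⟩
    subst hp; subst ht
    have hns : Complex.normSq r = 1 := by
      have := Complex.sq_norm r
      rw [hr] at this
      simpa using this.symm
    have hrc : r * (starRingEnd ℂ) r = 1 := by
      rw [Complex.mul_conj, hns]; norm_num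
    have hcr : (starRingEnd ℂ) r * r = 1 := by rw [mul_comm]; exact hrc
    refine ⟨by simp, by ring, by ring, by ring, by ring, by simp, by simp, ?_, ?_, by ring, ?_⟩
    · rw [hrc]; ring
    · rw [hcr]; ring
    · simp
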